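/- The semigroup N·A is an s-gluing of N·A^{E_1} and N·A^{E_2} if and only if pos(A) is the direct sum of pos(A^{E_1}) and pos(A^{E_2}). -/

import Mathlib

open scoped BigOperators

/-- The cone of nonnegative rational combinations of elements of `S`. -/
def posSpan {n : ℕ} (S : Set (Fin n → ℚ)) : Set (Fin n → ℚ) :=
  {x | ∃ (k : ℕ) (c : Fin k → ℚ) (b : Fin k → (Fin n → ℚ)),
    (∀ i, 0 ≤ c i) ∧ (∀ i, b i ∈ S) ∧ x = ∑ i, c i • b i}

/-- A rational polyhedral cone: `posSpan` of a finite set. -/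
def IsPolyCone {n : ℕ} (σ : Set (Fin n → ℚ)) : Prop :=
  ∃ B : Finset (Fin n → ℚ), σ = posSpan (B : Set (Fin n → ℚ))

/-- A cone is strongly convex if `σ ∩ (-σ) = {0}`. -/
def StronglyConvex {n : ℕ} (σ : Set (Fin n → ℚ)) : Prop :=
  ∀ x, x ∈ σ → -x ∈ σ → x = 0

/-- dot product in `ℚ^n`. -/
def dotQ {n : ℕ} (c x : Fin n → ℚ) : ℚ := ∑ i, c i * x i

/-- `R` is an extreme ray of `σ`: a one-dimensional face cut out by a
supporting vector `c`. -/
def IsExtremeRay {n : ℕ} (σ R : Set (Fin n → ℚ)) : Prop :=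
  ∃ c : Fin n → ℚ, (∀ x ∈ σ, 0 ≤ dotQ c x) ∧
    R = {x ∈ σ | dotQ c x = 0} ∧
    Module.finrank ℚ (Submodule.span ℚ R) = 1

/-- The dimension of a cone: dimension of its rational linear span. -/
noncomputable def coneDim {n : ℕ} (σ : Set (Fin n → ℚ)) : ℕ :=
  Module.finrank ℚ (Submodule.span ℚ σ)

/-- `σ` is the direct sum of `σ₁` and `σ₂` along `a`. -/
def IsDirectSumAlong {n : ℕ} (σ₁ σ₂ σ : Set (Fin n → ℚ)) (a : Fin n → ℚ) : Prop :=
  a ∈ σ₁ ∩ σ₂ ∧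
  Submodule.span ℚ σ₁ ⊓ Submodule.span ℚ σ₂ = Submodule.span ℚ {a} ∧
  σ = posSpan (σ₁ ∪ σ₂)

/-- `σ` is a direct sum of `σ₁` and `σ₂`. -/
def IsDirectSum {n : ℕ} (σ₁ σ₂ σ : Set (Fin n → ℚ)) : Prop :=
  ∃ a, IsDirectSumAlong σ₁ σ₂ σ a

/-- `a` lies on an extreme ray of `σ`. -/
def OnExtremeRay {n : ℕ} (σ : Set (Fin n → ℚ)) (a : Fin n → ℚ) : Prop :=
  ∃ R, IsExtremeRay σ R ∧ a ∈ R

/-- The ray `ℚ⁺ r`. -/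
def rayOf {n : ℕ} (r : Fin n → ℚ) : Set (Fin n → ℚ) :=
  {x | ∃ q : ℚ, 0 ≤ q ∧ x = q • r}

/-- Coordinatewise cast of an integer vector to a rational vector. -/
def ratify {n : ℕ} (v : Fin n → ℤ) : Fin n → ℚ := fun j => (v j : ℚ)

/-- The subsemigroup (submonoid) of ℤ^n generated by a set. -/
def natSpan {n : ℕ} (A : Set (Fin n → ℤ)) : AddSubmonoid (Fin n → ℤ) :=
  AddSubmonoid.closure A

/-- The subgroup of ℤ^n generated by a set. -/
def intSpan {n : ℕ} (A : Set (Fin n → ℤ)) : AddSubgroup (Fin n → ℤ) :=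
  AddSubgroup.closure A

/-- The semigroup generated by `A` has no invertible elements (is affine). -/
def IsAffineSemigroup {n : ℕ} (A : Set (Fin n → ℤ)) : Prop :=
  ∀ x ∈ natSpan A, -x ∈ natSpan A → x = 0

/-- `ℕ(A₁ ∪ A₂)` is the gluing of `ℕA₁` and `ℕA₂`. -/
def IsGluing {n : ℕ} (A₁ A₂ : Set (Fin n → ℤ)) : Prop :=
  ∃ a : Fin n → ℤ, a ≠ 0 ∧ a ∈ natSpan A₁ ⊓ natSpan A₂ ∧
    intSpan {a} = intSpan A₁ ⊓ intSpan A₂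

/-- `ℕ(A₁ ∪ A₂)` is the s-gluing of `ℕA₁` and `ℕA₂`. -/
def IsSGluing {n : ℕ} (A₁ A₂ : Set (Fin n → ℤ)) : Prop :=
  ∃ a : Fin n → ℤ, intSpan {a} = intSpan A₁ ⊓ intSpan A₂ ∧
    ∃ t : ℕ, 0 < t ∧ (t : ℤ) • a ∈ natSpan A₁ ⊓ natSpan A₂

/-- The gcd of the coordinates of an integer vector. -/
def coordGcd {n : ℕ} (a : Fin n → ℤ) : ℕ :=
  Finset.univ.gcd fun i => (a i).natAbs

-- ratify lemmas
lemma ratify_zero {n : ℕ} : ratify (0 : Fin n → ℤ) = 0 := by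
  funext j; simp [ratify]

lemma ratify_add {n : ℕ} (u v : Fin n → ℤ) : ratify (u + v) = ratify u + ratify v := by
  funext j; simp [ratify]

lemma ratify_neg {n : ℕ} (u : Fin n → ℤ) : ratify (-u) = -ratify u := by
  funext j; simp [ratify]

lemma ratify_zsmul {n : ℕ} (k : ℤ) (u : Fin n → ℤ) : ratify (k • u) = (k : ℚ) • ratify u := by
  funext j; simp [ratify]

lemma ratify_nsmul {n : ℕ} (k : ℕ) (u : Fin n → ℤ) : ratify (k • u) = (k : ℚ) • ratify u := by
  funext j; simp [ratify]

lemma ratify_injective {n : ℕ} : Function.Injective (ratify (n := n)) := by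
  intro u v h
  funext j
  have := congrFun h j
  simpa [ratify] using this

def ratifyHom {n : ℕ} : (Fin n → ℤ) →+ (Fin n → ℚ) where
  toFun := ratify
  map_zero' := ratify_zero
  map_add' := ratify_add

-- posSpan basic lemmas
lemma subset_posSpan {n : ℕ} (S : Set (Fin n → ℚ)) : S ⊆ posSpan S := by
  intro s hs
  exact ⟨1, fun _ => 1, fun _ => s, fun _ => zero_le_one, fun _ => hs, by simp⟩

lemma posSpan_zero_mem {n : ℕ} (S : Set (Fin n → ℚ)) : (0 : Fin n → ℚ) ∈ posSpan S :=
  ⟨0, fun i => 0, fun i => 0, fun i => le_refl _, fun i => i.elim0, by simp⟩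

lemma posSpan_add_mem {n : ℕ} {S : Set (Fin n → ℚ)} {x y : Fin n → ℚ}
    (hx : x ∈ posSpan S) (hy : y ∈ posSpan S) : x + y ∈ posSpan S := by
  obtain ⟨k, c, b, hc, hb, rfl⟩ := hx
  obtain ⟨l, d, e, hd, he, rfl⟩ := hy
  refine ⟨k + l, Fin.append c d, Fin.append b e, ?_, ?_, ?_⟩
  · intro i
    refine Fin.addCases (fun i => ?_) (fun i => ?_) i
    · simpa [Fin.append_left] using hc i
    · simpa [Fin.append_right] using hd i
  · intro i
    refine Fin.addCases (fun i => ?_) (fun i => ?_) i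
    · simpa [Fin.append_left] using hb i
    · simpa [Fin.append_right] using he i
  · rw [Fin.sum_univ_add]
    congr 1 <;> exact Finset.sum_congr rfl (by simp [Fin.append_left, Fin.append_right])

lemma posSpan_smul_mem {n : ℕ} {S : Set (Fin n → ℚ)} {x : Fin n → ℚ} {q : ℚ}
    (hq : 0 ≤ q) (hx : x ∈ posSpan S) : q • x ∈ posSpan S := by
  obtain ⟨k, c, b, hc, hb, rfl⟩ := hx
  refine ⟨k, fun i => q * c i, b, fun i => mul_nonneg hq (hc i), hb, ?_⟩
  rw [Finset.smul_sum]
  exact Finset.sum_congr rfl (by simp [smul_smul])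

lemma posSpan_mono {n : ℕ} {S T : Set (Fin n → ℚ)} (h : S ⊆ T) : posSpan S ⊆ posSpan T := by
  rintro x ⟨k, c, b, hc, hb, rfl⟩
  exact ⟨k, c, b, hc, fun i => h (hb i), rfl⟩

lemma posSpan_sum_mem {n : ℕ} {S : Set (Fin n → ℚ)} {ι : Type*} (s : Finset ι)
    (f : ι → (Fin n → ℚ)) (h : ∀ i ∈ s, f i ∈ posSpan S) : ∑ i ∈ s, f i ∈ posSpan S := by
  classical
  induction s using Finset.cons_induction with
  | empty => simpa using posSpan_zero_mem S
  | cons a s ha ih =>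
    rw [Finset.sum_cons]
    exact posSpan_add_mem (h a (Finset.mem_cons_self a s))
      (ih fun i hi => h i (Finset.mem_cons_of_mem hi))

lemma posSpan_union_posSpan {n : ℕ} (S T : Set (Fin n → ℚ)) :
    posSpan (posSpan S ∪ posSpan T) = posSpan (S ∪ T) := by
  apply Set.Subset.antisymm
  · rintro x ⟨k, c, b, hc, hb, rfl⟩
    apply posSpan_sum_mem
    intro i _
    apply posSpan_smul_mem (hc i)
    rcases hb i with h | h
    · exact posSpan_mono Set.subset_union_left h
    · exact posSpan_mono Set.subset_union_right h
  · exact posSpan_mono (Set.union_subset_union (subset_posSpan S) (subset_posSpan T))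

lemma posSpan_subset_span {n : ℕ} (S : Set (Fin n → ℚ)) :
    posSpan S ⊆ (Submodule.span ℚ S : Set (Fin n → ℚ)) := by
  rintro x ⟨k, c, b, hc, hb, rfl⟩
  exact Submodule.sum_mem _ fun i _ =>
    Submodule.smul_mem _ _ (Submodule.subset_span (hb i))

lemma span_posSpan {n : ℕ} (S : Set (Fin n → ℚ)) :
    Submodule.span ℚ (posSpan S) = Submodule.span ℚ S := by
  apply le_antisymm
  · rw [Submodule.span_le]; exact posSpan_subset_span S
  · exact Submodule.span_mono (subset_posSpan S)

-- bridge lemmas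
lemma natSpan_le_intSpan {n : ℕ} (A : Set (Fin n → ℤ)) {x : Fin n → ℤ}
    (hx : x ∈ natSpan A) : x ∈ intSpan A := by
  induction hx using AddSubmonoid.closure_induction with
  | mem x h => exact AddSubgroup.subset_closure h
  | zero => exact zero_mem _
  | add x y _ _ hx hy => exact add_mem hx hy

lemma ratify_mem_posSpan {n : ℕ} {A : Set (Fin n → ℤ)} {v : Fin n → ℤ}
    (hv : v ∈ natSpan A) : ratify v ∈ posSpan (ratify '' A) := by
  induction hv using AddSubmonoid.closure_induction with
  | mem x h => exact subset_posSpan _ ⟨x, h, rfl⟩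
  | zero => rw [ratify_zero]; exact posSpan_zero_mem _
  | add x y _ _ hx hy => rw [ratify_add]; exact posSpan_add_mem hx hy

lemma ratify_mem_span {n : ℕ} {A : Set (Fin n → ℤ)} {v : Fin n → ℤ}
    (hv : v ∈ intSpan A) : ratify v ∈ Submodule.span ℚ (ratify '' A) := by
  induction hv using AddSubgroup.closure_induction with
  | mem x h => exact Submodule.subset_span ⟨x, h, rfl⟩
  | zero => rw [ratify_zero]; exact zero_mem _
  | add x y _ _ hx hy => rw [ratify_add]; exact add_mem hx hy
  | neg x _ hx => rw [ratify_neg]; exact neg_mem hx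

lemma den_clearing {ι : Type*} (s : Finset ι) (c : ι → ℚ) :
    ∃ M : ℕ, 0 < M ∧ ∀ i ∈ s, ∃ z : ℤ, (z : ℚ) = (M : ℚ) * c i ∧ (0 ≤ c i → 0 ≤ z) := by
  refine ⟨∏ j ∈ s, (c j).den, Finset.prod_pos fun j _ => (c j).pos, fun i hi => ?_⟩
  obtain ⟨e, he⟩ := Finset.dvd_prod_of_mem (fun j => (c j).den) hi
  refine ⟨(c i).num * e, ?_, fun hci => mul_nonneg (Rat.num_nonneg.2 hci) (Int.natCast_nonneg e)⟩
  rw [he]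
  push_cast
  rw [mul_comm ((c i).den : ℚ) (e : ℚ), mul_assoc, Rat.den_mul_eq_num]
  ring

lemma exists_nat_smul_posSpan {n : ℕ} {A : Set (Fin n → ℤ)} {x : Fin n → ℚ}
    (hx : x ∈ posSpan (ratify '' A)) :
    ∃ M : ℕ, 0 < M ∧ ∃ v ∈ natSpan A, ratify v = (M : ℚ) • x := by
  classical
  obtain ⟨k, c, b, hc, hb, rfl⟩ := hx
  choose w hw hweq using hb
  obtain ⟨M, hM, hz⟩ := den_clearing Finset.univ c
  choose z hz1 hz2 using fun i => hz i (Finset.mem_univ i)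
  refine ⟨M, hM, ∑ i, (z i).toNat • w i, ?_, ?_⟩
  · exact sum_mem fun i _ => nsmul_mem (AddSubmonoid.subset_closure (hw i)) _
  · rw [show ratify (∑ i, (z i).toNat • w i) = ∑ i, ratify ((z i).toNat • w i) from
      map_sum ratifyHom _ _]
    rw [Finset.smul_sum]
    refine Finset.sum_congr rfl fun i _ => ?_
    rw [ratify_nsmul, hweq i]
    have htn : ((z i).toNat : ℚ) = ((z i : ℚ)) := by
      exact_mod_cast congrArg (Int.cast : ℤ → ℚ) (Int.toNat_of_nonneg (hz2 i (hc i)))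
    rw [htn, hz1 i, smul_smul]

lemma exists_int_smul_span {n : ℕ} {A : Set (Fin n → ℤ)} {x : Fin n → ℚ}
    (hx : x ∈ Submodule.span ℚ (ratify '' A)) :
    ∃ M : ℕ, 0 < M ∧ ∃ v ∈ intSpan A, ratify v = (M : ℚ) • x := by
  classical
  rw [Submodule.mem_span_set'] at hx
  obtain ⟨k, c, b, hsum⟩ := hx
  choose w hw hweq using fun i => (b i).2
  obtain ⟨M, hM, hz⟩ := den_clearing Finset.univ c
  choose z hz1 _ using fun i => hz i (Finset.mem_univ i)
  refine ⟨M, hM, ∑ i, z i • w i, ?_, ?_⟩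
  · exact sum_mem fun i _ => zsmul_mem (AddSubgroup.subset_closure (hw i)) _
  · rw [show ratify (∑ i, z i • w i) = ∑ i, ratify (z i • w i) from map_sum ratifyHom _ _,
      ← hsum, Finset.smul_sum]
    refine Finset.sum_congr rfl fun i _ => ?_
    rw [ratify_zsmul, hweq i, hz1 i, smul_smul]

lemma mem_intSpan_singleton {n : ℕ} {a v : Fin n → ℤ} :
    v ∈ intSpan {a} ↔ ∃ k : ℤ, k • a = v := AddSubgroup.mem_closure_singleton

lemma span_inf_eq {n : ℕ} (A₁ A₂ : Set (Fin n → ℤ)) (a : Fin n → ℤ)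
    (h : intSpan {a} = intSpan A₁ ⊓ intSpan A₂) :
    Submodule.span ℚ (ratify '' A₁) ⊓ Submodule.span ℚ (ratify '' A₂)
      = Submodule.span ℚ {ratify a} := by
  apply le_antisymm
  · intro x hx
    obtain ⟨hx₁, hx₂⟩ := Submodule.mem_inf.1 hx
    obtain ⟨M₁, hM₁, v₁, hv₁, he₁⟩ := exists_int_smul_span hx₁
    obtain ⟨M₂, hM₂, v₂, hv₂, he₂⟩ := exists_int_smul_span hx₂
    have heq : (M₂ : ℤ) • v₁ = (M₁ : ℤ) • v₂ := by
      apply ratify_injective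
      rw [ratify_zsmul, ratify_zsmul, he₁, he₂, smul_smul, smul_smul]
      push_cast
      rw [mul_comm]
    have hmem : (M₂ : ℤ) • v₁ ∈ intSpan {a} := by
      rw [h]
      exact AddSubgroup.mem_inf.2 ⟨zsmul_mem hv₁ _, heq ▸ zsmul_mem hv₂ _⟩
    obtain ⟨kk, hkk⟩ := mem_intSpan_singleton.1 hmem
    rw [Submodule.mem_span_singleton]
    refine ⟨(kk : ℚ) / ((M₁ : ℚ) * (M₂ : ℚ)), ?_⟩
    have hr : (kk : ℚ) • ratify a = ((M₁ : ℚ) * (M₂ : ℚ)) • x := by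
      have h2 := congrArg ratify hkk
      rw [ratify_zsmul, ratify_zsmul, he₁, smul_smul] at h2
      rw [h2]
      push_cast
      rw [mul_comm]
    have hM₁0 : (M₁ : ℚ) ≠ 0 := by exact_mod_cast hM₁.ne'
    have hM₂0 : (M₂ : ℚ) ≠ 0 := by exact_mod_cast hM₂.ne'
    rw [div_eq_mul_inv, mul_comm, mul_smul, hr, inv_smul_smul₀ (mul_ne_zero hM₁0 hM₂0)]
  · rw [Submodule.span_le, Set.singleton_subset_iff]
    have haa : a ∈ intSpan A₁ ⊓ intSpan A₂ := by
      rw [← h]; exact AddSubgroup.subset_closure rfl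
    exact Submodule.mem_inf.2
      ⟨ratify_mem_span (AddSubgroup.mem_inf.1 haa).1,
       ratify_mem_span (AddSubgroup.mem_inf.1 haa).2⟩

set_option maxHeartbeats 1000000 in
/-- `ℕA` is an s-gluing of `ℕA^{E₁}` and `ℕA^{E₂}` iff the cone of `A` is the
direct sum of the cones of `A^{E₁}` and `A^{E₂}`. -/
theorem sGluing_iff_directSum {n m : ℕ} (A : Fin m → (Fin n → ℤ))
    (E₁ E₂ : Set (Fin m)) (hne₁ : E₁.Nonempty) (hne₂ : E₂.Nonempty)
    (hcover : E₁ ∪ E₂ = Set.univ) (hdisj : E₁ ∩ E₂ = ∅) :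
    IsSGluing (A '' E₁) (A '' E₂) ↔
      IsDirectSum (posSpan (ratify '' (A '' E₁))) (posSpan (ratify '' (A '' E₂)))
        (posSpan (ratify '' Set.range A)) := by
  set A₁ := A '' E₁ with hA₁
  set A₂ := A '' E₂ with hA₂
  set S₁ := ratify '' A₁ with hS₁
  set S₂ := ratify '' A₂ with hS₂
  have hun : S₁ ∪ S₂ = ratify '' Set.range A := by
    rw [hS₁, hS₂, hA₁, hA₂, ← Set.image_union, ← Set.image_union, hcover, Set.image_univ]
  have hthird : posSpan (ratify '' Set.range A) = posSpan (posSpan S₁ ∪ posSpan S₂) := by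
    rw [posSpan_union_posSpan, hun]
  constructor
  · rintro ⟨a, hspan, t, ht, hta⟩
    obtain ⟨hta₁, hta₂⟩ := AddSubmonoid.mem_inf.1 hta
    have ht0 : ((t : ℚ)) ≠ 0 := by exact_mod_cast ht.ne'
    have hmem : ∀ {B : Set (Fin n → ℤ)}, (t : ℤ) • a ∈ natSpan B →
        ratify a ∈ posSpan (ratify '' B) := by
      intro B hB
      have h1 : ratify ((t : ℤ) • a) ∈ posSpan (ratify '' B) := ratify_mem_posSpan hB
      rw [ratify_zsmul, show (((t : ℤ) : ℚ)) = (t : ℚ) by push_cast; ring] at h1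
      have := posSpan_smul_mem (q := ((t : ℚ))⁻¹) (by positivity) h1
      rwa [smul_smul, inv_mul_cancel₀ ht0, one_smul] at this
    refine ⟨ratify a, ⟨hmem hta₁, hmem hta₂⟩, ?_, hthird⟩
    rw [span_posSpan, span_posSpan, hS₁, hS₂]
    exact span_inf_eq A₁ A₂ a hspan
  · rintro ⟨ra, ⟨hra₁, hra₂⟩, hspanEq, _⟩
    rw [span_posSpan, span_posSpan] at hspanEq
    have key : ∀ g ∈ intSpan A₁ ⊓ intSpan A₂, ∃ q : ℚ, q • ra = ratify g := by
      intro g hg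
      obtain ⟨hg₁, hg₂⟩ := AddSubgroup.mem_inf.1 hg
      have : ratify g ∈ Submodule.span ℚ S₁ ⊓ Submodule.span ℚ S₂ :=
        Submodule.mem_inf.2 ⟨ratify_mem_span hg₁, ratify_mem_span hg₂⟩
      rw [hspanEq] at this
      exact Submodule.mem_span_singleton.1 this
    by_cases hG : ∀ g ∈ intSpan A₁ ⊓ intSpan A₂, g = 0
    · refine ⟨0, ?_, 1, one_pos, ?_⟩
      · have hbot : intSpan A₁ ⊓ intSpan A₂ = ⊥ := by
          rw [AddSubgroup.eq_bot_iff_forall]; exact hG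
        rw [hbot]
        apply le_antisymm
        · rw [intSpan, AddSubgroup.closure_le]
          intro x hx
          rw [Set.mem_singleton_iff] at hx
          simp [hx]
        · exact bot_le
      · simpa using AddSubmonoid.mem_inf.2 ⟨zero_mem _, zero_mem _⟩
    · push_neg at hG
      obtain ⟨g₀, hg₀G, hg₀⟩ := hG
      obtain ⟨q₀, hq₀⟩ := key g₀ hg₀G
      obtain ⟨i, hi⟩ : ∃ i, g₀ i ≠ 0 := by
        by_contra h
        push_neg at h
        exact hg₀ (funext h)
      have hrai : ra i ≠ 0 := by
        intro h
        apply hi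
        have := congrFun hq₀ i
        simp only [Pi.smul_apply, smul_eq_mul, h, mul_zero, ratify] at this
        exact_mod_cast this.symm
      set H : AddSubgroup ℤ :=
        AddSubgroup.map (Pi.evalAddMonoidHom (fun _ : Fin n => ℤ) i)
          (intSpan A₁ ⊓ intSpan A₂) with hH
      obtain ⟨d, hd⟩ := Int.subgroup_cyclic H
      have hdH : d ∈ H := by
        rw [hd]; exact AddSubgroup.subset_closure rfl
      obtain ⟨a', ha'G, ha'i⟩ := hdH
      have hzero : ∀ g ∈ intSpan A₁ ⊓ intSpan A₂, g i = 0 → g = 0 := by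
        intro g hg hgi
        obtain ⟨q, hq⟩ := key g hg
        have hqr : q * ra i = 0 := by
          have := congrFun hq i
          simp only [Pi.smul_apply, smul_eq_mul, ratify, hgi] at this
          simpa using this
        have hq0 : q = 0 := by
          rcases mul_eq_zero.1 hqr with h | h
          · exact h
          · exact absurd h hrai
        apply ratify_injective
        rw [← hq, hq0, zero_smul, ratify_zero]
      have hGen : intSpan {a'} = intSpan A₁ ⊓ intSpan A₂ := by
        apply le_antisymm
        · rw [intSpan, AddSubgroup.closure_le]
          intro x hx
          rw [Set.mem_singleton_iff] at hx
          rw [hx]; exact ha'G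
        · intro g hg
          have hgi : g i ∈ H := ⟨g, hg, rfl⟩
          rw [hd] at hgi
          obtain ⟨k, hk⟩ := AddSubgroup.mem_closure_singleton.1 hgi
          have hsub : g - k • a' = 0 := by
            apply hzero _ (sub_mem hg (zsmul_mem ha'G k))
            have hai : a' i = d := ha'i
            have hcoord : (g - k • a') i = g i - k * a' i := by
              simp [smul_eq_mul]
            have hk' : k * d = g i := by simpa [smul_eq_mul] using hk
            rw [hcoord, hai]
            omega
          have hg' : g = k • a' := sub_eq_zero.1 hsub
          exact AddSubgroup.mem_closure_singleton.2 ⟨k, hg'.symm⟩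
      obtain ⟨M₁, hM₁, v₁, hv₁, he₁⟩ := exists_nat_smul_posSpan hra₁
      obtain ⟨M₂, hM₂, v₂, hv₂, he₂⟩ := exists_nat_smul_posSpan hra₂
      set w := M₂ • v₁ with hwdef
      have hw2 : w = M₁ • v₂ := by
        apply ratify_injective
        rw [hwdef, ratify_nsmul, ratify_nsmul, he₁, he₂, smul_smul, smul_smul, mul_comm]
      have hw1 : w ∈ natSpan A₁ := nsmul_mem hv₁ _
      have hw2' : w ∈ natSpan A₂ := hw2 ▸ nsmul_mem hv₂ _
      have hwG : w ∈ intSpan A₁ ⊓ intSpan A₂ :=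
        AddSubgroup.mem_inf.2 ⟨natSpan_le_intSpan _ hw1, natSpan_le_intSpan _ hw2'⟩
      rw [← hGen] at hwG
      obtain ⟨kk, hkk⟩ := mem_intSpan_singleton.1 hwG
      have hrw : ratify w = (((M₂ : ℚ)) * (M₁ : ℚ)) • ra := by
        rw [hwdef, ratify_nsmul, he₁, smul_smul]
      have hkne : kk ≠ 0 := by
        rintro rfl
        rw [zero_smul] at hkk
        have : ratify w = 0 := by rw [← hkk, ratify_zero]
        rw [hrw] at this
        have hMM : ((M₂ : ℚ)) * (M₁ : ℚ) ≠ 0 := by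
          have h1 : (M₁ : ℚ) ≠ 0 := by exact_mod_cast hM₁.ne'
          have h2 : (M₂ : ℚ) ≠ 0 := by exact_mod_cast hM₂.ne'
          exact mul_ne_zero h2 h1
        have : ra = 0 := by
          have := smul_eq_zero.1 this
          tauto
        exact hrai (by rw [this]; rfl)
      rcases hkne.lt_or_gt with hk | hk
      · refine ⟨-a', ?_, (-kk).toNat, by omega, ?_⟩
        · rw [← hGen]
          show AddSubgroup.closure _ = AddSubgroup.closure _
          rw [← Set.neg_singleton, AddSubgroup.closure_neg]
        · have hsm : (((-kk).toNat : ℤ)) • (-a') = kk • a' := by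
            rw [Int.toNat_of_nonneg (by omega)]
            rw [smul_neg, neg_smul, neg_neg]
          rw [hsm, hkk]
          exact AddSubmonoid.mem_inf.2 ⟨hw1, hw2'⟩
      · refine ⟨a', ?_, kk.toNat, by omega, ?_⟩
        · exact hGen
        · have hsm : ((kk.toNat : ℤ)) • a' = kk • a' := by
            rw [Int.toNat_of_nonneg (by omega)]
          rw [hsm, hkk]
          exact AddSubmonoid.mem_inf.2 ⟨hw1, hw2'⟩
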